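/- Let A be a finite-dimensional commutative unital ℝ-algebra with basis e₀ = 1, e₁, ..., eₙ, and f(x) = ∑ₖ eₖ uₖ(x) with uₖ ∈ C¹. Then f is A-holomorphic if and only if the Cauchy–Riemann type conditions hold: for each l = 1, ..., n and all x, ∑ₖ eₖ ∂uₖ/∂xₗ(x) = eₗ · ∑ₖ eₖ ∂uₖ/∂x₀(x). -/

import Mathlib

private theorem keyDeriv {A : Type*} [NormedCommRing A] [NormedAlgebra ℝ A]
    {f : A → A} (hf : ContDiff ℝ 1 f) (x v : A) :
    HasDerivAt (fun t : ℝ => f (x + t • v)) (fderiv ℝ f x v) 0 := by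
  have hline : HasDerivAt (fun t : ℝ => x + t • v) v 0 := by
    simpa using ((hasDerivAt_id (0 : ℝ)).smul_const v).const_add x
  have hdf : HasFDerivAt f (fderiv ℝ f x) ((fun t : ℝ => x + t • v) 0) := by
    simpa using (hf.differentiable one_ne_zero x).hasFDerivAt
  exact hdf.comp_hasDerivAt 0 hline

private theorem keyCoord {A : Type*} [NormedCommRing A] [NormedAlgebra ℝ A]
    [FiniteDimensional ℝ A] {n : ℕ} (b : Module.Basis (Fin (n + 1)) ℝ A)
    {f : A → A} (hf : ContDiff ℝ 1 f) (x v : A) (k : Fin (n + 1)) :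
    deriv (fun t : ℝ => b.repr (f (x + t • v)) k) 0 = b.repr (fderiv ℝ f x v) k := by
  have φ : A →L[ℝ] ℝ := LinearMap.toContinuousLinearMap (b.coord k)
  exact (((LinearMap.toContinuousLinearMap (b.coord k)).hasFDerivAt).comp_hasDerivAt 0
    (keyDeriv hf x v)).deriv

private theorem keySum {A : Type*} [NormedCommRing A] [NormedAlgebra ℝ A]
    [FiniteDimensional ℝ A] {n : ℕ} (b : Module.Basis (Fin (n + 1)) ℝ A)
    {f : A → A} (hf : ContDiff ℝ 1 f) (x v : A) :
    ∑ k, (deriv (fun t : ℝ => b.repr (f (x + t • v)) k) 0) • b k = fderiv ℝ f x v := by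
  simp only [keyCoord b hf x v]
  exact b.sum_repr _

theorem A_holomorphic_iff_cauchy_riemann
    (A : Type*) [NormedCommRing A] [NormedAlgebra ℝ A] [FiniteDimensional ℝ A]
    (n : ℕ) (b : Module.Basis (Fin (n + 1)) ℝ A) (hb0 : b 0 = 1)
    (f : A → A) (hf : ContDiff ℝ 1 f) :
    (∃ f' : A → A, ∀ x h : A,
        HasDerivAt (fun ε : ℝ => f (x + ε • h)) (h * f' x) 0) ↔
      (∀ l : Fin (n + 1), l ≠ 0 → ∀ x : A,
        ∑ k, (deriv (fun t : ℝ => b.repr (f (x + t • b l)) k) 0) • b k =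
          b l * ∑ k, (deriv (fun t : ℝ => b.repr (f (x + t • b 0)) k) 0) • b k) := by
  constructor
  · rintro ⟨f', hf'⟩ l _ x
    have huniq : ∀ h : A, fderiv ℝ f x h = h * f' x := fun h =>
      (keyDeriv hf x h).unique (hf' x h)
    rw [keySum b hf, keySum b hf, huniq, huniq, hb0, one_mul]
  · intro hcr
    refine ⟨fun x => fderiv ℝ f x 1, fun x h => ?_⟩
    have hl : ∀ l : Fin (n + 1), fderiv ℝ f x (b l) = b l * fderiv ℝ f x 1 := by
      intro l
      by_cases h0 : l = 0
      · rw [h0, hb0, one_mul]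
      · simpa [keySum b hf, hb0] using hcr l h0 x
    have hh : fderiv ℝ f x h = h * fderiv ℝ f x 1 := by
      conv_lhs => rw [← b.sum_repr h]
      rw [map_sum]
      conv_rhs => rw [← b.sum_repr h, Finset.sum_mul]
      refine Finset.sum_congr rfl fun l _ => ?_
      rw [map_smul, hl l, smul_mul_assoc]
    rw [← hh]
    exact keyDeriv hf x h
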